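/- Let $(S,\mathcal{F},\mu)$ be $\sigma$-finite, $H$ separable Hilbert, $\psi$ the bounded radial map built from $\psi_0(r)=r/(1+|r|)$, and $F, F_n: S \to H$ measurable with $F_n \to F$ $\psi$-pseudo-weakly. Then $|F|_H \leq \limsup_{n\to\infty} |F_n|_H$ $\mu$-almost everywhere. -/

import Mathlib

open MeasureTheory Filter Set
open scoped ENNReal RealInnerProductSpace

/-- The bounded radial map `ψ(h) = h/(1+‖h‖)` built from `ψ₀(r) = r/(1+|r|)`. -/
noncomputable def psiMap {H : Type*} [NormedAddCommGroup H] [InnerProductSpace ℝ H]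
    (h : H) : H := (1 / (1 + ‖h‖)) • h

lemma psi0_mono {a b : ℝ} (ha : 0 ≤ a) (hab : a ≤ b) : a / (1 + a) ≤ b / (1 + b) := by
  rw [div_le_div_iff₀ (by linarith) (by linarith)]
  nlinarith

lemma psi0_strictMono {a b : ℝ} (ha : 0 ≤ a) (hab : a < b) : a / (1 + a) < b / (1 + b) := by
  rw [div_lt_div_iff₀ (by linarith) (by linarith)]
  nlinarith

lemma psiMap_norm {H : Type*} [NormedAddCommGroup H] [InnerProductSpace ℝ H] (h : H) :
    ‖psiMap h‖ = ‖h‖ / (1 + ‖h‖) := by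
  have h1 : (0:ℝ) < 1 + ‖h‖ := by positivity
  rw [psiMap, norm_smul, Real.norm_eq_abs, abs_of_pos (by positivity), one_div,
    inv_mul_eq_div]

lemma psiMap_norm_le_one {H : Type*} [NormedAddCommGroup H] [InnerProductSpace ℝ H] (h : H) :
    ‖psiMap h‖ ≤ 1 := by
  rw [psiMap_norm, div_le_one (by positivity)]
  linarith [norm_nonneg h]

lemma psiMap_continuous {H : Type*} [NormedAddCommGroup H] [InnerProductSpace ℝ H] :
    Continuous (psiMap : H → H) := by
  apply Continuous.smul _ continuous_id
  exact continuous_const.div (by continuity) (fun h => by positivity)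

/-- `ψ`-pseudo-weak convergence: `ψ(Fₙ) ⇀ ψ(F)` weakly in `L²(S; H, 𝟙_A μ)` for every
measurable `A` of finite measure. -/
def PseudoWeakTendsto {S : Type*} [MeasurableSpace S] (μ : Measure S)
    {H : Type*} [NormedAddCommGroup H] [InnerProductSpace ℝ H] [CompleteSpace H]
    (Fn : ℕ → S → H) (F : S → H) : Prop :=
  ∀ A : Set S, MeasurableSet A → μ A < ∞ →
    ∀ G : S → H, MemLp G 2 (μ.restrict A) →
      Tendsto (fun n => ∫ y in A, ⟪psiMap (Fn n y), G y⟫ ∂μ) atTop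
        (nhds (∫ y in A, ⟪psiMap (F y), G y⟫ ∂μ))

set_option maxHeartbeats 1000000 in
/-- If `Fₙ → F` `ψ`-pseudo-weakly, then `‖F‖ ≤ limsup_n ‖Fₙ‖` `μ`-a.e. -/
theorem norm_le_limsup_of_pseudoWeak
    {S : Type*} [MeasurableSpace S] (μ : Measure S) [SigmaFinite μ]
    {H : Type*} [NormedAddCommGroup H] [InnerProductSpace ℝ H] [CompleteSpace H]
    [SecondCountableTopology H]
    (Fn : ℕ → S → H) (F : S → H)
    (hFn : ∀ n, AEStronglyMeasurable (Fn n) μ)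
    (hF : AEStronglyMeasurable F μ)
    (hlim : PseudoWeakTendsto μ Fn F) :
    ∀ᵐ y ∂μ, (‖F y‖₊ : ℝ≥0∞) ≤ Filter.limsup (fun n => (‖Fn n y‖₊ : ℝ≥0∞)) atTop := by
  borelize H
  set f := hF.mk F with hfdef
  have hfm : StronglyMeasurable f := hF.stronglyMeasurable_mk
  have hff : F =ᵐ[μ] f := hF.ae_eq_mk
  set fn : ℕ → S → H := fun n => (hFn n).mk (Fn n) with hfndef
  have hfnm : ∀ n, StronglyMeasurable (fn n) := fun n => (hFn n).stronglyMeasurable_mk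
  have hfn : ∀ n, Fn n =ᵐ[μ] fn n := fun n => (hFn n).ae_eq_mk
  have hfn' : ∀ᵐ y ∂μ, ∀ n, Fn n y = fn n y := ae_all_iff.2 hfn
  set L : S → ℝ≥0∞ := fun y => limsup (fun n => (‖fn n y‖₊ : ℝ≥0∞)) atTop with hLdef
  have main : ∀ᵐ y ∂μ, (‖f y‖₊ : ℝ≥0∞) ≤ L y := by
    by_contra hcon
    rw [ae_iff] at hcon
    have hLmeas : Measurable L :=
      Measurable.limsup fun n => ((hfnm n).measurable.nnnorm).coe_nnreal_ennreal
    set C : ℚ × ℚ → Set S := fun p =>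
      ({y | L y < (Real.toNNReal p.1 : ℝ≥0∞)} ∩
        {y | ((Real.toNNReal p.2 : ℝ≥0∞)) < (‖f y‖₊ : ℝ≥0∞)}) ∩
        {_y | (p.1 : ℝ) < (p.2 : ℝ)} with hCdef
    have hsub : {y | ¬ (‖f y‖₊ : ℝ≥0∞) ≤ L y} ⊆ ⋃ p : ℚ × ℚ, C p := by
      intro y hy
      simp only [mem_setOf_eq, not_le] at hy
      obtain ⟨q, hq0, h1, h2⟩ := ENNReal.lt_iff_exists_rat_btwn.1 hy
      obtain ⟨q', hq'0, h3, h4⟩ := ENNReal.lt_iff_exists_rat_btwn.1 h2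
      have hqq' : (q : ℝ) < (q' : ℝ) := by
        have h3' : Real.toNNReal (q:ℝ) < Real.toNNReal (q':ℝ) := ENNReal.coe_lt_coe.1 h3
        have := NNReal.coe_lt_coe.2 h3'
        rwa [Real.coe_toNNReal _ (by exact_mod_cast hq0),
          Real.coe_toNNReal _ (by exact_mod_cast hq'0)] at this
      exact mem_iUnion.2 ⟨(q, q'), ⟨⟨h1, h4⟩, hqq'⟩⟩
    obtain ⟨p, hp⟩ : ∃ p : ℚ × ℚ, μ (C p) ≠ 0 := by
      by_contra h; push_neg at h
      exact hcon (measure_mono_null hsub (measure_iUnion_null h))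
    obtain ⟨q, q'⟩ := p
    obtain ⟨y₀, hy₀⟩ : (C (q, q')).Nonempty := nonempty_of_measure_ne_zero hp
    have hqq' : (q : ℝ) < (q' : ℝ) := hy₀.2
    have hq0 : 0 < (q : ℝ) := by
      have h1 := hy₀.1.1
      by_contra h; push_neg at h
      rw [Real.toNNReal_of_nonpos (by exact_mod_cast h)] at h1
      simp at h1
    have hq'0 : 0 < (q' : ℝ) := lt_trans hq0 hqq'
    set c : ℝ := (q : ℝ) / (1 + q) with hc
    set c' : ℝ := (q' : ℝ) / (1 + q') with hc'
    have hcc' : c < c' := psi0_strictMono hq0.le hqq'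
    have hc'pos : 0 < c' := by rw [hc']; positivity
    have hcpos : 0 ≤ c := by rw [hc]; positivity
    -- Egorov-type sets
    set E : ℕ → Set S := fun N =>
      C (q, q') ∩ ⋂ n, ⋂ (_ : N ≤ n), {y | ‖fn n y‖ ≤ (q : ℝ)} with hEdef
    have hEeq : (⋃ N, E N) = C (q, q') := by
      refine Subset.antisymm (iUnion_subset fun N => inter_subset_left) fun y hy => ?_
      have h1 : L y < (Real.toNNReal (q:ℝ) : ℝ≥0∞) := hy.1.1
      have hev : ∀ᶠ n in atTop, (‖fn n y‖₊ : ℝ≥0∞) < Real.toNNReal (q:ℝ) :=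
        Filter.eventually_lt_of_limsup_lt h1
      obtain ⟨N, hN⟩ := eventually_atTop.1 hev
      refine mem_iUnion.2 ⟨N, hy, ?_⟩
      simp only [mem_iInter, mem_setOf_eq]
      intro n hn
      have := NNReal.coe_lt_coe.2 (ENNReal.coe_lt_coe.1 (hN n hn))
      rw [Real.coe_toNNReal _ hq0.le] at this
      simpa using this.le
    have hEmeas : ∀ N, MeasurableSet (E N) := by
      intro N
      have hCmeas : MeasurableSet (C (q, q')) := by
        refine (((hLmeas (measurableSet_Iio)).inter ?_).inter ?_)
        · exact measurableSet_lt measurable_const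
            ((hfm.measurable.nnnorm).coe_nnreal_ennreal)
        · exact MeasurableSet.const _
      exact hCmeas.inter (MeasurableSet.iInter fun n => MeasurableSet.iInter fun _ =>
        measurableSet_le (hfnm n).measurable.norm measurable_const)
    obtain ⟨N, hEN⟩ : ∃ N, μ (E N) ≠ 0 := by
      by_contra h; push_neg at h
      exact hp (hEeq ▸ measure_iUnion_null h)
    obtain ⟨k, hBne⟩ : ∃ k, μ (E N ∩ spanningSets μ k) ≠ 0 := by
      by_contra h; push_neg at h
      have h0 : μ (⋃ k, E N ∩ spanningSets μ k) = 0 := measure_iUnion_null h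
      rw [← inter_iUnion, iUnion_spanningSets, inter_univ] at h0
      exact hEN h0
    set B := E N ∩ spanningSets μ k with hBdef
    have hBmeas : MeasurableSet B := (hEmeas N).inter (measurableSet_spanningSets μ k)
    have hBfin : μ B < ∞ :=
      lt_of_le_of_lt (measure_mono inter_subset_right) (measure_spanningSets_lt_top μ k)
    haveI := Fact.mk hBfin
    -- the test function
    set g : S → H := fun y => psiMap (f y) with hgdef
    have hgm : StronglyMeasurable g := psiMap_continuous.comp_stronglyMeasurable hfm
    have hgbd : ∀ y, ‖g y‖ ≤ 1 := fun y => psiMap_norm_le_one _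
    have hgmem : MemLp g 2 (μ.restrict B) :=
      MemLp.of_bound hgm.aestronglyMeasurable 1 (ae_of_all _ hgbd)
    have htend := hlim B hBmeas hBfin g hgmem
    -- identify the limit with ∫ ‖g‖²
    have hKeq : (∫ y in B, ⟪psiMap (F y), g y⟫ ∂μ) = ∫ y in B, ‖g y‖ ^ 2 ∂μ := by
      refine integral_congr_ae ?_
      filter_upwards [ae_restrict_of_ae hff] with y hy
      rw [hy]
      exact real_inner_self_eq_norm_sq _
    -- basic integrability
    have hint1 : IntegrableOn (fun y => ‖g y‖) B μ :=
      (integrable_const (1:ℝ)).mono' hgm.norm.aestronglyMeasurable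
        (ae_of_all _ fun y => by simpa [abs_of_nonneg (norm_nonneg (g y))] using hgbd y)
    have hint2 : IntegrableOn (fun y => ‖g y‖ ^ 2) B μ :=
      (integrable_const (1:ℝ)).mono' (hgm.norm.pow 2).aestronglyMeasurable
        (ae_of_all _ fun y => by
          have := hgbd y
          have h0 := norm_nonneg (g y)
          rw [Real.norm_eq_abs, abs_of_nonneg (by positivity)]
          nlinarith)
    have hintc' : IntegrableOn (fun _ : S => c') B μ := integrable_const _
    have hintcg : IntegrableOn (fun y => c' * ‖g y‖) B μ := hint1.const_mul _
    have hintcg2 : IntegrableOn (fun y => c * ‖g y‖) B μ := hint1.const_mul _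
    -- pointwise lower bound on B for ‖g‖
    have hglb : ∀ y ∈ B, c' ≤ ‖g y‖ := by
      intro y hy
      have h2 : (Real.toNNReal (q':ℝ) : ℝ≥0∞) < (‖f y‖₊ : ℝ≥0∞) := hy.1.1.1.2
      have h3 : (q' : ℝ) ≤ ‖f y‖ := by
        have := NNReal.coe_lt_coe.2 (ENNReal.coe_lt_coe.1 h2)
        rw [Real.coe_toNNReal _ hq'0.le] at this
        simpa using this.le
      rw [hgdef]
      simp only
      rw [psiMap_norm]
      exact psi0_mono hq'0.le h3
    -- J > 0
    set J : ℝ := ∫ y in B, ‖g y‖ ∂μ with hJ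
    have hJlb : c' * (μ B).toReal ≤ J := by
      have := setIntegral_mono_on hintc' hint1 hBmeas hglb
      rwa [setIntegral_const, smul_eq_mul, mul_comm] at this
    have hmu : 0 < (μ B).toReal := ENNReal.toReal_pos hBne hBfin.ne
    have hJpos : 0 < J := lt_of_lt_of_le (by positivity) hJlb
    -- K ≥ c' * J
    have hKlb : c' * J ≤ ∫ y in B, ‖g y‖ ^ 2 ∂μ := by
      rw [hJ, ← integral_const_mul]
      refine setIntegral_mono_on hintcg hint2 hBmeas fun y hy => ?_
      have h1 := hglb y hy
      have h0 := norm_nonneg (g y)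
      nlinarith
    -- K ≤ c * J via the weak convergence
    have hKub : (∫ y in B, ‖g y‖ ^ 2 ∂μ) ≤ c * J := by
      rw [← hKeq]
      refine le_of_tendsto htend (eventually_atTop.2 ⟨N, fun n hn => ?_⟩)
      have heqn : (∫ y in B, ⟪psiMap (Fn n y), g y⟫ ∂μ)
          = ∫ y in B, ⟪psiMap (fn n y), g y⟫ ∂μ := by
        refine integral_congr_ae ?_
        filter_upwards [ae_restrict_of_ae (hfn n)] with y hy
        rw [hy]
      rw [heqn, hJ, ← integral_const_mul]
      have hintinner : IntegrableOn (fun y => ⟪psiMap (fn n y), g y⟫) B μ := by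
        refine (integrable_const (1:ℝ)).mono'
          ((psiMap_continuous.comp_stronglyMeasurable (hfnm n)).inner hgm).aestronglyMeasurable
          (ae_of_all _ fun y => ?_)
        have h1 := abs_real_inner_le_norm (psiMap (fn n y)) (g y)
        have h2 := psiMap_norm_le_one (fn n y)
        have h3 := hgbd y
        have h4 := norm_nonneg (psiMap (fn n y))
        have h5 := norm_nonneg (g y)
        rw [Real.norm_eq_abs]
        nlinarith
      refine setIntegral_mono_on hintinner hintcg2 hBmeas fun y hy => ?_
      have h1 : ‖fn n y‖ ≤ (q:ℝ) := by
        have := hy.1.2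
        simp only [mem_iInter, mem_setOf_eq] at this
        exact this n hn
      have h2 : ‖psiMap (fn n y)‖ ≤ c := by
        rw [psiMap_norm]; exact psi0_mono (norm_nonneg _) h1
      calc ⟪psiMap (fn n y), g y⟫ ≤ ‖psiMap (fn n y)‖ * ‖g y‖ := real_inner_le_norm _ _
        _ ≤ c * ‖g y‖ := by
            have := norm_nonneg (g y)
            have := norm_nonneg (psiMap (fn n y))
            nlinarith
    have h7 : c' * J ≤ c * J := le_trans hKlb hKub
    have h8 : c' ≤ c := le_of_mul_le_mul_right h7 hJpos
    linarith
  filter_upwards [main, hff, hfn'] with y h1 h2 h3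
  rw [h2]
  have : (fun n => (‖Fn n y‖₊ : ℝ≥0∞)) = fun n => (‖fn n y‖₊ : ℝ≥0∞) :=
    funext fun n => by rw [h3 n]
  rw [this]
  exact h1
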